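/- Exponential weights regret bound for mixable losses over a finite expert set: if ℓ is η-mixable, and at each round t the learner plays a prediction p̂_t satisfying exp(−η ℓ(p̂_t, y)) ≥ Σ_k w_t(k) exp(−η ℓ(p_k, y)) for all y, where w_t(k) ∝ exp(−η Σ_{s<t} ℓ(p_k(x_s), y_s)), then for any sequence (y_1,…,y_n) and any expert k*, Σ_t ℓ(p̂_t, y_t) − Σ_t ℓ(p_{k*}(x_t), y_t) ≤ (log K)/η, where K is the number of experts. -/

import Mathlib

open Finset

/-- Exponential-weights regret bound for η-mixable losses over K experts: if at
each round t the learner's loss b t certifies the mixability inequality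
exp(−η b t) ≥ Σ_k w_t(k) exp(−η a t k y_t) with weights
w_t(k) ∝ exp(−η Σ_{s<t} a s k), then for every expert k*,
Σ_t b t − Σ_t a t k* ≤ (log K)/η. -/
theorem exponential_weights_regret (K n : ℕ) (hK : 0 < K) (η : ℝ) (hη : 0 < η)
    (a : Fin n → Fin K → ℝ)  -- a t k = ℓ(p_k(x_t), y_t)
    (b : Fin n → ℝ)          -- b t = ℓ(p̂_t, y_t)
    (hmix : ∀ t : Fin n,
      Real.exp (-η * b t) ≥
        ∑ k : Fin K,
          (Real.exp (-η * ∑ s ∈ univ.filter (fun s : Fin n => s < t), a s k) /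
            ∑ j : Fin K,
              Real.exp (-η * ∑ s ∈ univ.filter (fun s : Fin n => s < t), a s j)) *
          Real.exp (-η * a t k)) :
    ∀ kstar : Fin K,
      (∑ t : Fin n, b t) - (∑ t : Fin n, a t kstar) ≤ Real.log K / η := by
  intro kstar
  -- potential
  set W : ℕ → ℝ := fun t => ∑ k : Fin K,
      Real.exp (-η * ∑ s ∈ univ.filter (fun s : Fin n => s.val < t), a s k) with hW
  have hWpos : ∀ t, 0 < W t := by
    intro t
    exact Finset.sum_pos (fun k _ => Real.exp_pos _) (by simpa using Finset.univ_nonempty_iff.2 ⟨⟨0, hK⟩⟩)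
  have key : ∀ t ≤ n, W t ≤ K * Real.exp (-η * ∑ s ∈ univ.filter (fun s : Fin n => s.val < t), b s) := by
    intro t ht
    induction t with
    | zero =>
      simp [hW]
    | succ t ih =>
      have htn : t < n := ht
      have ih' := ih (le_of_lt htn)
      set tt : Fin n := ⟨t, htn⟩ with htt
      have hfilt : ∀ (f : Fin n → ℝ),
          (∑ s ∈ univ.filter (fun s : Fin n => s.val < t + 1), f s)
            = f tt + ∑ s ∈ univ.filter (fun s : Fin n => s.val < t), f s := by
        intro f
        have hset : univ.filter (fun s : Fin n => s.val < t + 1)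
            = insert tt (univ.filter (fun s : Fin n => s.val < t)) := by
          ext s
          simp only [mem_insert, mem_filter, mem_univ, true_and]
          constructor
          · intro h
            rcases Nat.lt_succ_iff_lt_or_eq.1 h with h | h
            · exact Or.inr h
            · exact Or.inl (Fin.ext h)
          · rintro (rfl | h)
            · exact Nat.lt_succ_self _
            · exact Nat.lt_succ_of_lt h
        rw [hset, Finset.sum_insert (by simp [htt])]
      have hfilt2 : (univ.filter (fun s : Fin n => s < tt))
          = univ.filter (fun s : Fin n => s.val < t) := by
        ext s; simp only [mem_filter, mem_univ, true_and]; exact Iff.rfl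
      have hmixt := hmix tt
      rw [hfilt2] at hmixt
      -- multiply by W t > 0
      have hmul : ∑ k : Fin K,
          Real.exp (-η * ∑ s ∈ univ.filter (fun s : Fin n => s.val < t), a s k) *
            Real.exp (-η * a tt k) ≤ Real.exp (-η * b tt) * W t := by
        have := mul_le_mul_of_nonneg_right hmixt (le_of_lt (hWpos t))
        calc ∑ k : Fin K,
            Real.exp (-η * ∑ s ∈ univ.filter (fun s : Fin n => s.val < t), a s k) *
              Real.exp (-η * a tt k)
            = (∑ k : Fin K,
              (Real.exp (-η * ∑ s ∈ univ.filter (fun s : Fin n => s.val < t), a s k) / W t) *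
                Real.exp (-η * a tt k)) * W t := by
              rw [Finset.sum_mul]
              congr 1; ext k
              rw [div_mul_eq_mul_div, div_mul_cancel₀ _ (ne_of_gt (hWpos t))]
          _ ≤ Real.exp (-η * b tt) * W t := this
      have hstep : W (t + 1) ≤ Real.exp (-η * b tt) * W t := by
        calc W (t + 1)
            = ∑ k : Fin K,
              Real.exp (-η * ∑ s ∈ univ.filter (fun s : Fin n => s.val < t), a s k) *
                Real.exp (-η * a tt k) := by
              simp only [hW]
              congr 1; ext k
              rw [hfilt (fun s => a s k), ← Real.exp_add]
              ring_nf
          _ ≤ Real.exp (-η * b tt) * W t := hmul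
      calc W (t + 1) ≤ Real.exp (-η * b tt) * W t := hstep
        _ ≤ Real.exp (-η * b tt) *
            (K * Real.exp (-η * ∑ s ∈ univ.filter (fun s : Fin n => s.val < t), b s)) := by
            exact mul_le_mul_of_nonneg_left ih' (le_of_lt (Real.exp_pos _))
        _ = K * Real.exp (-η * ∑ s ∈ univ.filter (fun s : Fin n => s.val < t + 1), b s) := by
            rw [hfilt b, show -η * (b tt + ∑ s ∈ univ.filter (fun s : Fin n => s.val < t), b s)
              = -η * b tt + -η * ∑ s ∈ univ.filter (fun s : Fin n => s.val < t), b s by ring,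
              Real.exp_add]; ring
  have hWn := key n le_rfl
  have hfull : (univ.filter (fun s : Fin n => s.val < n)) = univ := by
    ext s; simp [s.isLt]
  rw [hfull] at hWn
  have hlow : Real.exp (-η * ∑ t : Fin n, a t kstar) ≤ W n := by
    have : Real.exp (-η * ∑ s ∈ univ.filter (fun s : Fin n => s.val < n), a s kstar) ≤ W n :=
      Finset.single_le_sum (f := fun k => Real.exp (-η * ∑ s ∈ univ.filter (fun s : Fin n => s.val < n), a s k))
        (fun k _ => le_of_lt (Real.exp_pos _)) (mem_univ kstar)
    rwa [hfull] at this
  have hcomb : Real.exp (-η * ∑ t : Fin n, a t kstar) ≤ K * Real.exp (-η * ∑ t : Fin n, b t) :=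
    le_trans hlow hWn
  have hlog := Real.log_le_log (Real.exp_pos _) hcomb
  rw [Real.log_exp, Real.log_mul (by positivity) (ne_of_gt (Real.exp_pos _)), Real.log_exp] at hlog
  rw [le_div_iff₀ hη]
  nlinarith [hlog]
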